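/- Let s > 0 and let f, g : ℝ² → ℝ be continuously differentiable functions such that ∂g/∂x(x,y) − ∂f/∂y(x,y) = 1 for all (x,y) ∈ ℝ². Then there exists a point z in the closed disc of radius s centered at the origin such that √(f(z)² + g(z)²) ≥ s/2. -/

import Mathlib

open Real MeasureTheory intervalIntegral Set

private lemma clm_apply_pair (L : ℝ × ℝ →L[ℝ] ℝ) (a b : ℝ) :
    L (a, b) = a * L (1, 0) + b * L (0, 1) := by
  have hab : ((a, b) : ℝ × ℝ) = a • ((1 : ℝ), (0 : ℝ)) + b • ((0 : ℝ), (1 : ℝ)) := by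
    simp [Prod.smul_mk, Prod.ext_iff]
  rw [hab, L.map_add, L.map_smul, L.map_smul, smul_eq_mul, smul_eq_mul]

private lemma cs_aux (a b c d : ℝ) (h : c ^ 2 + d ^ 2 = 1) :
    |b * c - a * d| ≤ Real.sqrt (a ^ 2 + b ^ 2) := by
  rw [← Real.sqrt_sq_eq_abs]
  apply Real.sqrt_le_sqrt
  nlinarith [sq_nonneg (a * c + b * d)]

set_option maxHeartbeats 1000000 in
theorem primitive_of_area_form_lower_bound (s : ℝ) (hs : 0 < s)
    (f g : ℝ × ℝ → ℝ) (hf : ContDiff ℝ 1 f) (hg : ContDiff ℝ 1 g)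
    (h : ∀ z : ℝ × ℝ, fderiv ℝ g z (1, 0) - fderiv ℝ f z (0, 1) = 1) :
    ∃ z : ℝ × ℝ, Real.sqrt (z.1 ^ 2 + z.2 ^ 2) ≤ s ∧
      s / 2 ≤ Real.sqrt (f z ^ 2 + g z ^ 2) := by
  have hfd : Differentiable ℝ f := hf.differentiable one_ne_zero
  have hgd : Differentiable ℝ g := hg.differentiable one_ne_zero
  have hfc : Continuous f := hf.continuous
  have hgc : Continuous g := hg.continuous
  have hfdc : Continuous (fderiv ℝ f) := hf.continuous_fderiv one_ne_zero
  have hgdc : Continuous (fderiv ℝ g) := hg.continuous_fderiv one_ne_zero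
  -- the polar parametrization
  set p : ℝ → ℝ → ℝ × ℝ := fun t θ => (t * Real.cos θ, t * Real.sin θ) with hp
  have hpc : Continuous (fun q : ℝ × ℝ => p q.1 q.2) := by
    fun_prop
  -- tangent vector functions
  set F : ℝ → ℝ → ℝ := fun t θ =>
    t * (g (p t θ) * Real.cos θ - f (p t θ) * Real.sin θ) with hF
  set G : ℝ → ℝ → ℝ := fun t θ =>
    f (p t θ) * Real.cos θ + g (p t θ) * Real.sin θ with hG
  set dG : ℝ → ℝ → ℝ := fun t θ =>
    (fderiv ℝ f (p t θ)) (t * (-Real.sin θ), t * Real.cos θ) * Real.cos θ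
      - f (p t θ) * Real.sin θ
      + (fderiv ℝ g (p t θ)) (t * (-Real.sin θ), t * Real.cos θ) * Real.sin θ
      + g (p t θ) * Real.cos θ with hdG
  -- radial curve derivative
  have hcurve_t : ∀ θ t : ℝ, HasDerivAt (fun t => p t θ) (Real.cos θ, Real.sin θ) t :=
    fun θ t => HasDerivAt.prodMk (hasDerivAt_mul_const _) (hasDerivAt_mul_const _)
  have hcurve_θ : ∀ t θ : ℝ, HasDerivAt (fun θ => p t θ)
      (t * (-Real.sin θ), t * Real.cos θ) θ :=
    fun t θ => HasDerivAt.prodMk ((Real.hasDerivAt_cos θ).const_mul t) ((Real.hasDerivAt_sin θ).const_mul t)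
  -- θ-derivative of G
  have hGθ : ∀ t θ : ℝ, HasDerivAt (fun θ => G t θ) (dG t θ) θ := by
    intro t θ
    have h1 : HasDerivAt (fun θ => f (p t θ))
        ((fderiv ℝ f (p t θ)) (t * (-Real.sin θ), t * Real.cos θ)) θ :=
      (hfd (p t θ)).hasFDerivAt.comp_hasDerivAt θ (hcurve_θ t θ)
    have h2 : HasDerivAt (fun θ => g (p t θ))
        ((fderiv ℝ g (p t θ)) (t * (-Real.sin θ), t * Real.cos θ)) θ :=
      (hgd (p t θ)).hasFDerivAt.comp_hasDerivAt θ (hcurve_θ t θ)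
    have := (h1.mul (Real.hasDerivAt_cos θ)).add (h2.mul (Real.hasDerivAt_sin θ))
    refine HasDerivAt.congr_deriv this (Eq.symm ?_)
    simp [hdG]
    ring
  -- t-derivative of F equals t + dG
  have hFt : ∀ θ t : ℝ, HasDerivAt (fun t => F t θ) (t + dG t θ) t := by
    intro θ t
    have h1 : HasDerivAt (fun t => f (p t θ))
        ((fderiv ℝ f (p t θ)) (Real.cos θ, Real.sin θ)) t :=
      (hfd (p t θ)).hasFDerivAt.comp_hasDerivAt t (hcurve_t θ t)
    have h2 : HasDerivAt (fun t => g (p t θ))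
        ((fderiv ℝ g (p t θ)) (Real.cos θ, Real.sin θ)) t :=
      (hgd (p t θ)).hasFDerivAt.comp_hasDerivAt t (hcurve_t θ t)
    have hprod := (hasDerivAt_id t).mul
      ((h2.mul_const (Real.cos θ)).sub (h1.mul_const (Real.sin θ)))
    refine HasDerivAt.congr_deriv hprod (Eq.symm ?_)
    have hfe := clm_apply_pair (fderiv ℝ f (p t θ)) (Real.cos θ) (Real.sin θ)
    have hge := clm_apply_pair (fderiv ℝ g (p t θ)) (Real.cos θ) (Real.sin θ)
    have hfe2 := clm_apply_pair (fderiv ℝ f (p t θ)) (t * (-Real.sin θ)) (t * Real.cos θ)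
    have hge2 := clm_apply_pair (fderiv ℝ g (p t θ)) (t * (-Real.sin θ)) (t * Real.cos θ)
    have hpt := h (p t θ)
    have hsc := Real.sin_sq_add_cos_sq θ
    simp only [hdG]
    rw [hfe, hge, hfe2, hge2]
    set fx := (fderiv ℝ f (p t θ)) (1, 0)
    set fy := (fderiv ℝ f (p t θ)) (0, 1)
    set gx := (fderiv ℝ g (p t θ)) (1, 0)
    set gy := (fderiv ℝ g (p t θ)) (0, 1)
    simp only [id_eq, Pi.sub_apply]
    linear_combination (-(t * (Real.sin θ ^ 2 + Real.cos θ ^ 2))) * hpt + (-t) * hsc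
  -- continuity of dG as a function of (t, θ)
  have hdGc : Continuous (fun q : ℝ × ℝ => dG q.1 q.2) := by
    simp only [hdG]
    apply Continuous.add
    apply Continuous.add
    apply Continuous.sub
    · exact ((hfdc.comp hpc).clm_apply (by fun_prop)).mul (by fun_prop)
    · fun_prop
    · exact ((hgdc.comp hpc).clm_apply (by fun_prop)).mul (by fun_prop)
    · fun_prop
  have hFsc : Continuous (fun θ => F s θ) := by fun_prop
  -- FTC in t : for each θ, ∫_0^s (t + dG t θ) dt = F s θ
  have step1 : ∀ θ : ℝ, ∫ t in (0:ℝ)..s, dG t θ = F s θ - s ^ 2 / 2 := by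
    intro θ
    have hc1 : Continuous fun t : ℝ => dG t θ :=
      hdGc.comp (continuous_id.prodMk continuous_const)
    have hc2 : Continuous fun t : ℝ => t + dG t θ := continuous_id.add hc1
    have hftc : ∫ t in (0:ℝ)..s, (t + dG t θ) = F s θ - F 0 θ :=
      intervalIntegral.integral_eq_sub_of_hasDerivAt (f := fun t => F t θ)
        (f' := fun t => t + dG t θ) (fun t _ => hFt θ t) (hc2.intervalIntegrable 0 s)
    have hsplit : ∫ t in (0:ℝ)..s, (t + dG t θ)
        = (∫ t in (0:ℝ)..s, t) + ∫ t in (0:ℝ)..s, dG t θ :=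
      intervalIntegral.integral_add (continuous_id.intervalIntegrable 0 s)
        (hc1.intervalIntegrable 0 s)
    have hF0 : F 0 θ = 0 := by simp [hF]
    have hid : (∫ t in (0:ℝ)..s, t) = s ^ 2 / 2 := by
      rw [integral_id]; ring
    rw [hsplit, hid, hF0] at hftc
    linarith
  -- FTC in θ : for each t, ∫_0^{2π} dG t θ dθ = 0
  have step2 : ∀ t : ℝ, ∫ θ in (0:ℝ)..(2 * π), dG t θ = 0 := by
    intro t
    have hc1 : Continuous fun θ : ℝ => dG t θ :=
      hdGc.comp (continuous_const.prodMk continuous_id)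
    have hftc : ∫ θ in (0:ℝ)..(2 * π), dG t θ = G t (2 * π) - G t 0 :=
      intervalIntegral.integral_eq_sub_of_hasDerivAt (f := fun θ => G t θ)
        (f' := fun θ => dG t θ) (fun θ _ => hGθ t θ) (hc1.intervalIntegrable 0 (2 * π))
    rw [hftc]
    simp [hG, hp]
  -- Fubini to swap the double integral of dG
  have hs' : (0:ℝ) ≤ s := hs.le
  have h2π : (0:ℝ) ≤ 2 * π := by positivity
  have swap : ∫ θ in (0:ℝ)..(2 * π), (∫ t in (0:ℝ)..s, dG t θ) = 0 := by
    rw [intervalIntegral.integral_of_le h2π]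
    have : ∀ θ : ℝ, (∫ t in (0:ℝ)..s, dG t θ) = ∫ t in Ioc (0:ℝ) s, dG t θ := fun θ =>
      intervalIntegral.integral_of_le hs'
    simp_rw [this]
    have hint : Integrable (Function.uncurry fun θ t => dG t θ)
        ((volume.restrict (Ioc (0:ℝ) (2 * π))).prod (volume.restrict (Ioc (0:ℝ) s))) := by
      rw [Measure.prod_restrict]
      have : IntegrableOn (Function.uncurry fun θ t : ℝ => dG t θ)
          (Icc (0:ℝ) (2 * π) ×ˢ Icc (0:ℝ) s) (volume.prod volume) := by
        rw [← Measure.volume_eq_prod]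
        exact ((hdGc.comp (continuous_snd.prodMk continuous_fst)).continuousOn).integrableOn_compact
          (isCompact_Icc.prod isCompact_Icc)
      exact this.mono_set (Set.prod_mono Ioc_subset_Icc_self Ioc_subset_Icc_self)
    rw [MeasureTheory.integral_integral_swap hint]
    have : ∀ t : ℝ, (∫ θ in Ioc (0:ℝ) (2 * π), dG t θ) = 0 := by
      intro t
      rw [← intervalIntegral.integral_of_le h2π]
      exact step2 t
    simp_rw [this]
    simp
  -- hence ∫ F s θ dθ = π s²
  have key : ∫ θ in (0:ℝ)..(2 * π), F s θ = π * s ^ 2 := by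
    have h1 : ∫ θ in (0:ℝ)..(2 * π), (F s θ - s ^ 2 / 2) = 0 := by
      have := intervalIntegral.integral_congr (μ := volume) (a := (0:ℝ)) (b := 2 * π)
        (f := fun θ => F s θ - s ^ 2 / 2) (g := fun θ => ∫ t in (0:ℝ)..s, dG t θ)
        (fun θ _ => (step1 θ).symm)
      rw [this, swap]
    have h2 : ∫ θ in (0:ℝ)..(2 * π), (F s θ - s ^ 2 / 2)
        = (∫ θ in (0:ℝ)..(2 * π), F s θ) - ∫ θ in (0:ℝ)..(2 * π), (s ^ 2 / 2 : ℝ) := by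
      apply intervalIntegral.integral_sub
      · exact hFsc.intervalIntegrable 0 (2 * π)
      · exact intervalIntegrable_const
    have h3 : (∫ θ in (0:ℝ)..(2 * π), (s ^ 2 / 2 : ℝ)) = π * s ^ 2 := by
      rw [intervalIntegral.integral_const]
      simp
      ring
    rw [h2, h3] at h1
    linarith
  -- maximum of √(f²+g²) on the closed euclidean disc
  set K : Set (ℝ × ℝ) := {z : ℝ × ℝ | z.1 ^ 2 + z.2 ^ 2 ≤ s ^ 2} with hK
  have hKclosed : IsClosed K := isClosed_le (by fun_prop) continuous_const
  have hKsub : K ⊆ Metric.closedBall (0 : ℝ × ℝ) s := by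
    intro z hz
    simp only [hK, mem_setOf_eq] at hz
    rw [Metric.mem_closedBall, dist_zero_right, Prod.norm_def]
    have h1 : |z.1| ≤ s := by nlinarith [sq_abs z.1, abs_nonneg z.1, sq_nonneg z.2]
    have h2 : |z.2| ≤ s := by nlinarith [sq_abs z.2, abs_nonneg z.2, sq_nonneg z.1]
    simp only [Real.norm_eq_abs]
    exact max_le h1 h2
  have hKcompact : IsCompact K :=
    (isCompact_closedBall (0 : ℝ × ℝ) s).of_isClosed_subset hKclosed hKsub
  have hKne : K.Nonempty := ⟨(0, 0), by simp [hK]; positivity⟩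
  have hφc : Continuous fun z : ℝ × ℝ => Real.sqrt (f z ^ 2 + g z ^ 2) := by fun_prop
  obtain ⟨z₀, hz₀K, hmax⟩ := hKcompact.exists_isMaxOn hKne hφc.continuousOn
  set M : ℝ := Real.sqrt (f z₀ ^ 2 + g z₀ ^ 2) with hM
  have hMnonneg : 0 ≤ M := Real.sqrt_nonneg _
  -- pointwise bound on F s θ
  have hbound : ∀ θ ∈ Set.uIoc (0:ℝ) (2 * π), ‖F s θ‖ ≤ s * M := by
    intro θ _
    have hpK : p s θ ∈ K := by
      simp only [hK, hp, mem_setOf_eq]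
      nlinarith [Real.sin_sq_add_cos_sq θ]
    have hle : Real.sqrt (f (p s θ) ^ 2 + g (p s θ) ^ 2) ≤ M := hmax hpK
    have hcs : |g (p s θ) * Real.cos θ - f (p s θ) * Real.sin θ|
        ≤ Real.sqrt (f (p s θ) ^ 2 + g (p s θ) ^ 2) :=
      cs_aux _ _ _ _ (Real.cos_sq_add_sin_sq θ)
    have : ‖F s θ‖ = s * |g (p s θ) * Real.cos θ - f (p s θ) * Real.sin θ| := by
      rw [hF]
      rw [Real.norm_eq_abs, abs_mul, abs_of_pos hs]
    rw [this]
    have := hcs.trans hle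
    nlinarith
  have hineq : ‖∫ θ in (0:ℝ)..(2 * π), F s θ‖ ≤ s * M * |2 * π - 0| :=
    intervalIntegral.norm_integral_le_of_norm_le_const hbound
  rw [key] at hineq
  have hπ : 0 < π := Real.pi_pos
  have habs1 : ‖π * s ^ 2‖ = π * s ^ 2 := by
    rw [Real.norm_eq_abs, abs_of_pos (by positivity)]
  have habs2 : |2 * π - 0| = 2 * π := by
    rw [sub_zero, abs_of_pos (by positivity)]
  rw [habs1, habs2] at hineq
  refine ⟨z₀, ?_, ?_⟩
  · have : Real.sqrt (z₀.1 ^ 2 + z₀.2 ^ 2) ≤ Real.sqrt (s ^ 2) := Real.sqrt_le_sqrt hz₀K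
    rwa [Real.sqrt_sq hs'] at this
  · nlinarith [mul_pos hπ hs, hineq, hMnonneg]
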